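/- Let a, b, c be distinct natural numbers with gcd(a,b,c) = 1 and P(a,b,c) ≤ 1/9. Then a, b, c are all odd, and writing a/b = p/q, a/c = r/s, b/c = u/v in lowest terms, we have 1/(pq) + 1/(rs) + 1/(uv) ≥ 5/9. -/

import Mathlib

open MeasureTheory Real Set

/-- The cosine sign correlation: the normalized measure of the set of `x ∈ [0, 2π]`
where all `cos (aᵢ x)` are positive or all are negative. -/
noncomputable def cosP (n : ℕ) (a : Fin n → ℕ) : ℝ :=
  (volume {x : ℝ | x ∈ Icc 0 (2 * π) ∧
    ((∀ i, 0 < Real.cos (a i * x)) ∨ (∀ i, Real.cos (a i * x) < 0))}).toReal / (2 * π)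

def epsd (d : ℕ) : ℤ := if d = 0 ∨ d = 3 then 1 else -1
def chi4 (p : ℕ) : ℤ := if p % 4 = 1 then 1 else if p % 4 = 3 then -1 else 0

lemma pow_step (p d i : ℕ) (hp : 0 < p) (hd : d < 4) (hi : i < p) :
    ((-1:ℤ)^((4*i+d+p)/(2*p))) =
      if 4*i+d < p then 1 else if 4*i+d < 3*p then -1 else 1 := by
  split_ifs with h1 h2
  · rw [Nat.div_eq_of_lt (by omega)]; norm_num
  · rw [show (4*i+d+p)/(2*p) = 1 from Nat.div_eq_of_lt_le (by omega) (by omega)]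
    norm_num
  · rw [show (4*i+d+p)/(2*p) = 2 from Nat.div_eq_of_lt_le (by omega) (by omega)]
    norm_num

lemma sum_class (p d : ℕ) (hp : 0 < p) (hd : d < 4) :
    ∑ i ∈ Finset.range p, ((-1:ℤ)^((4*i+d+p)/(2*p))) = chi4 p * epsd d := by
  have h1 : ∀ i ∈ Finset.range p, ((-1:ℤ)^((4*i+d+p)/(2*p))) =
      1 - 2 * (if p ≤ 4*i+d ∧ 4*i+d < 3*p then (1:ℤ) else 0) := by
    intro i hi
    rw [pow_step p d i hp hd (Finset.mem_range.mp hi)]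
    split_ifs <;> omega
  rw [Finset.sum_congr rfl h1, Finset.sum_sub_distrib]
  rw [Finset.sum_const, ← Finset.mul_sum, Finset.sum_boole]
  have h2 : Finset.filter (fun i => p ≤ 4*i+d ∧ 4*i+d < 3*p) (Finset.range p)
      = Finset.Ico ((p+3-d)/4) ((3*p+3-d)/4) := by
    ext i
    simp only [Finset.mem_filter, Finset.mem_range, Finset.mem_Ico]
    omega
  rw [h2, Nat.card_Ico]
  rcases (show p % 4 = 0 ∨ p % 4 = 1 ∨ p % 4 = 2 ∨ p % 4 = 3 by omega) with h|h|h|h <;>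
    rcases (show d = 0 ∨ d = 1 ∨ d = 2 ∨ d = 3 by omega) with hd'|hd'|hd'|hd' <;>
    simp only [chi4, epsd, h, hd'] <;> norm_num <;> omega

lemma sum_crt (p q : ℕ) (hp : 0 < p) (hq : 0 < q) (h : Nat.Coprime p q) (f g : ℕ → ℤ) :
    ∑ k ∈ Finset.range (p*q), f (k % p) * g (k % q)
      = (∑ i ∈ Finset.range p, f i) * (∑ j ∈ Finset.range q, g j) := by
  rw [Finset.sum_mul_sum, ← Finset.sum_product']
  refine Finset.sum_nbij' (fun k => (k % p, k % q))
    (fun ij => (Nat.chineseRemainder h ij.1 ij.2 : ℕ) % (p*q)) ?_ ?_ ?_ ?_ ?_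
  · intro k hk
    simp only [Finset.mem_product, Finset.mem_range]
    exact ⟨Nat.mod_lt _ hp, Nat.mod_lt _ hq⟩
  · intro ij hij
    simp only [Finset.mem_range]
    exact Nat.mod_lt _ (Nat.mul_pos hp hq)
  · intro k hk
    simp only [Finset.mem_range] at hk
    have h1 : (Nat.chineseRemainder h (k % p) (k % q) : ℕ) ≡ k [MOD p*q] := by
      refine ((Nat.chineseRemainder_modEq_unique h ?_ ?_).symm)
      · exact (Nat.mod_modEq k p).symm
      · exact (Nat.mod_modEq k q).symm
    calc (Nat.chineseRemainder h (k % p) (k % q) : ℕ) % (p*q)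
        = k % (p*q) := h1
      _ = k := Nat.mod_eq_of_lt hk
  · intro ij hij
    simp only [Finset.mem_product, Finset.mem_range] at hij
    have hc := (Nat.chineseRemainder h ij.1 ij.2).prop
    have e1 : (Nat.chineseRemainder h ij.1 ij.2 : ℕ) % (p*q) % p = ij.1 := by
      rw [Nat.mod_mod_of_dvd _ ⟨q, rfl⟩]
      calc (Nat.chineseRemainder h ij.1 ij.2 : ℕ) % p = ij.1 % p := hc.1
        _ = ij.1 := Nat.mod_eq_of_lt hij.1
    have e2 : (Nat.chineseRemainder h ij.1 ij.2 : ℕ) % (p*q) % q = ij.2 := by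
      rw [Nat.mod_mod_of_dvd _ ⟨p, Nat.mul_comm p q⟩]
      calc (Nat.chineseRemainder h ij.1 ij.2 : ℕ) % q = ij.2 % q := hc.2
        _ = ij.2 := Nat.mod_eq_of_lt hij.2
    exact Prod.ext e1 e2
  · intro k hk; rfl

lemma sum_T (p q : ℕ) (hp : 0 < p) (hq : 0 < q) (h : Nat.Coprime p q) :
    ∑ j ∈ Finset.range (4*(p*q)), (-1:ℤ)^((j+p)/(2*p)+(j+q)/(2*q))
      = 4 * (chi4 p * chi4 q) := by
  -- reindex j = 4k + d
  have hre : ∑ j ∈ Finset.range (4*(p*q)), (-1:ℤ)^((j+p)/(2*p)+(j+q)/(2*q))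
      = ∑ dk ∈ Finset.range 4 ×ˢ Finset.range (p*q),
          (-1:ℤ)^((4*dk.2+dk.1+p)/(2*p)) * (-1:ℤ)^((4*dk.2+dk.1+q)/(2*q)) := by
    refine Finset.sum_nbij' (fun j => (j % 4, j / 4)) (fun dk => 4*dk.2+dk.1) ?_ ?_ ?_ ?_ ?_
    · intro j hj
      simp only [Finset.mem_product, Finset.mem_range] at *
      constructor
      · omega
      · omega
    · intro dk hdk
      simp only [Finset.mem_product, Finset.mem_range] at *
      omega
    · intro j hj; dsimp only; omega
    · intro dk hdk
      simp only [Finset.mem_product, Finset.mem_range] at hdk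
      ext <;> dsimp only <;> omega
    · intro j hj
      dsimp only
      have e : 4*(j/4)+j%4 = j := by omega
      rw [e, pow_add]
  rw [hre, Finset.sum_product]
  -- for fixed d, reduce mod p and mod q and apply CRT
  have hstep : ∀ d ∈ Finset.range 4,
      ∑ k ∈ Finset.range (p*q),
          (-1:ℤ)^((4*k+d+p)/(2*p)) * (-1:ℤ)^((4*k+d+q)/(2*q))
        = chi4 p * epsd d * (chi4 q * epsd d) := by
    intro d hd
    have hd4 := Finset.mem_range.mp hd
    have hper : ∀ k, (-1:ℤ)^((4*k+d+p)/(2*p)) * (-1:ℤ)^((4*k+d+q)/(2*q))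
        = (-1:ℤ)^((4*(k%p)+d+p)/(2*p)) * (-1:ℤ)^((4*(k%q)+d+q)/(2*q)) := by
      intro k
      have e1 : (4*k+d+p)/(2*p) = (4*(k%p)+d+p)/(2*p) + 2*(k/p) := by
        conv_lhs => rw [show 4*k+d+p = 4*(k%p)+d+p + (2*(k/p))*(2*p) by
          have := Nat.div_add_mod k p; ring_nf; omega]
        rw [Nat.add_mul_div_right _ _ (by omega : 0 < 2*p)]
      have e2 : (4*k+d+q)/(2*q) = (4*(k%q)+d+q)/(2*q) + 2*(k/q) := by
        conv_lhs => rw [show 4*k+d+q = 4*(k%q)+d+q + (2*(k/q))*(2*q) by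
          have := Nat.div_add_mod k q; ring_nf; omega]
        rw [Nat.add_mul_div_right _ _ (by omega : 0 < 2*q)]
      rw [e1, e2, pow_add, pow_add]
      have : ((-1:ℤ))^(2*(k/p)) = 1 := by
        rw [pow_mul]; norm_num
      rw [this]
      have : ((-1:ℤ))^(2*(k/q)) = 1 := by
        rw [pow_mul]; norm_num
      rw [this]; ring
    rw [Finset.sum_congr rfl (fun k _ => hper k)]
    rw [sum_crt p q hp hq h (fun i => (-1:ℤ)^((4*i+d+p)/(2*p)))
      (fun j => (-1:ℤ)^((4*j+d+q)/(2*q)))]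
    rw [sum_class p d hp hd4, sum_class q d hq hd4]
  rw [Finset.sum_congr rfl hstep]
  have : ∀ d ∈ Finset.range 4, chi4 p * epsd d * (chi4 q * epsd d)
      = (chi4 p * chi4 q) * (epsd d * epsd d) := by intro d _; ring
  rw [Finset.sum_congr rfl this, ← Finset.mul_sum]
  have : ∑ d ∈ Finset.range 4, epsd d * epsd d = 4 := by decide
  rw [this]; ring

lemma meas_sign : Measurable Real.sign := by
  unfold Real.sign
  exact Measurable.ite (measurableSet_lt measurable_id' measurable_const) measurable_const
    (Measurable.ite (measurableSet_lt measurable_const measurable_id') measurable_const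
      measurable_const)

lemma abs_sign_le (x : ℝ) : |Real.sign x| ≤ 1 := by
  rcases Real.sign_apply_eq x with h | h | h <;> rw [h] <;> norm_num

lemma f_meas (p q : ℕ) : Measurable (fun x : ℝ =>
    Real.sign (Real.cos ((p:ℝ)*x)) * Real.sign (Real.cos ((q:ℝ)*x))) := by
  apply Measurable.mul <;>
    exact meas_sign.comp (Real.continuous_cos.comp (continuous_const.mul continuous_id)).measurable

lemma f_intble (p q : ℕ) (A B : ℝ) : IntervalIntegrable (fun x : ℝ =>
    Real.sign (Real.cos ((p:ℝ)*x)) * Real.sign (Real.cos ((q:ℝ)*x))) volume A B := by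
  rw [intervalIntegrable_iff]
  refine Integrable.mono' (g := fun _ => (1:ℝ))
    (integrableOn_const measure_Ioc_lt_top.ne) ((f_meas p q).aestronglyMeasurable) ?_
  filter_upwards with x
  rw [Real.norm_eq_abs, abs_mul]
  calc |Real.sign (Real.cos ((p:ℝ)*x))| * |Real.sign (Real.cos ((q:ℝ)*x))|
      ≤ 1 * 1 := by
        apply mul_le_mul (abs_sign_le _) (abs_sign_le _) (abs_nonneg _) zero_le_one
    _ = 1 := by norm_num

lemma cos_add_nat_pi (x : ℝ) (n : ℕ) : Real.cos (x + n*π) = (-1:ℝ)^n * Real.cos x := by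
  induction n with
  | zero => simp
  | succ m ih =>
    have : x + ((m:ℝ)+1)*π = (x + m*π) + π := by ring
    push_cast
    rw [this, Real.cos_add_pi, ih]
    ring

lemma sign_cos_pow (n : ℕ) {t : ℝ} (h1 : (n:ℝ)*π - π/2 < t) (h2 : t < n*π + π/2) :
    Real.sign (Real.cos t) = (-1:ℝ)^n := by
  have hc : Real.cos t = (-1:ℝ)^n * Real.cos (t - n*π) := by
    nth_rewrite 1 [show t = (t - n*π) + n*π by ring]
    rw [cos_add_nat_pi]
  have hpos : 0 < Real.cos (t - n*π) :=
    Real.cos_pos_of_mem_Ioo ⟨by linarith, by linarith⟩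
  rcases Nat.even_or_odd n with he | ho
  · rw [hc, he.neg_one_pow]
    rw [one_mul, Real.sign_of_pos hpos]
  · rw [hc, ho.neg_one_pow]
    rw [show (-1:ℝ) * Real.cos (t - n*π) = -(Real.cos (t-n*π)) by ring,
      Real.sign_of_neg (by linarith)]

lemma sign_cos_grid (q j : ℕ) (hq : 0 < q) {t : ℝ}
    (h1 : (j:ℝ)*π/(2*q) < t) (h2 : t < ((j:ℝ)+1)*π/(2*q)) :
    Real.sign (Real.cos t) = (-1:ℝ)^((j+q)/(2*q)) := by
  have hdm := Nat.div_add_mod (j+q) (2*q)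
  have hml : (j+q) % (2*q) < 2*q := Nat.mod_lt _ (by omega)
  have hq' : (0:ℝ) < q := by exact_mod_cast hq
  have hπ := Real.pi_pos
  have key1 : 2*q*((j+q)/(2*q)) ≤ j + q := by omega
  have key2 : j + 1 ≤ 2*q*((j+q)/(2*q)) + q := by omega
  have k1 : ((2*q*((j+q)/(2*q)):ℕ):ℝ) ≤ ((j+q:ℕ):ℝ) := by exact_mod_cast key1
  have k2 : ((j+1:ℕ):ℝ) ≤ ((2*q*((j+q)/(2*q)) + q:ℕ):ℝ) := by exact_mod_cast key2
  push_cast at k1 k2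
  apply sign_cos_pow
  · calc ((((j+q)/(2*q)):ℕ):ℝ)*π - π/2 ≤ (j:ℝ)*π/(2*q) := by
          rw [sub_le_iff_le_add, div_add' _ _ _ (by positivity), le_div_iff₀ (by positivity)]
          nlinarith
      _ < t := h1
  · calc t < ((j:ℝ)+1)*π/(2*q) := h2
      _ ≤ ((((j+q)/(2*q)):ℕ):ℝ)*π + π/2 := by
          rw [div_le_iff₀ (by positivity)]
          nlinarith

lemma integralPair (p q : ℕ) (hp : 0 < p) (hq : 0 < q) :
    ∫ x in (0:ℝ)..(2*π), Real.sign (Real.cos ((p:ℝ)*x)) * Real.sign (Real.cos ((q:ℝ)*x))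
      = (π/(2*(p*q))) *
        ∑ j ∈ Finset.range (4*(p*q)), ((-1:ℝ)^((j+p)/(2*p)+(j+q)/(2*q))) := by
  have hp' : (0:ℝ) < p := by exact_mod_cast hp
  have hq' : (0:ℝ) < q := by exact_mod_cast hq
  have hπ := Real.pi_pos
  set δ : ℝ := π/(2*((p:ℝ)*q)) with hδ
  have hδpos : 0 < δ := by positivity
  have hsum := intervalIntegral.sum_integral_adjacent_intervals
    (a := fun k : ℕ => (k:ℝ)*δ) (n := 4*(p*q)) (μ := volume)
    (f := fun x : ℝ => Real.sign (Real.cos ((p:ℝ)*x)) * Real.sign (Real.cos ((q:ℝ)*x)))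
    (fun k _ => f_intble p q _ _)
  have haN : ((4*(p*q):ℕ):ℝ)*δ = 2*π := by
    rw [hδ]; push_cast; field_simp; ring
  simp only [Nat.cast_zero, zero_mul] at hsum
  rw [haN] at hsum
  rw [← hsum]
  rw [Finset.mul_sum]
  apply Finset.sum_congr rfl
  intro j _
  have hle : (j:ℝ)*δ ≤ ((j+1:ℕ):ℝ)*δ := by
    have : ((j:ℝ)) ≤ ((j:ℝ)+1) := by linarith
    push_cast
    nlinarith
  rw [intervalIntegral.integral_of_le hle, MeasureTheory.integral_Ioc_eq_integral_Ioo]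
  have hconst : EqOn (fun x : ℝ => Real.sign (Real.cos ((p:ℝ)*x)) * Real.sign (Real.cos ((q:ℝ)*x)))
      (fun _ => ((-1:ℝ)^((j+q)/(2*q)) * (-1:ℝ)^((j+p)/(2*p))))
      (Ioo ((j:ℝ)*δ) (((j+1:ℕ):ℝ)*δ)) := by
    intro x hx
    obtain ⟨hx1, hx2⟩ := hx
    have hpx1 : (j:ℝ)*π/(2*q) < (p:ℝ)*x := by
      have h := mul_lt_mul_of_pos_left hx1 hp'
      calc (j:ℝ)*π/(2*q) = (p:ℝ)*((j:ℝ)*δ) := by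
            rw [hδ]; push_cast; field_simp
        _ < (p:ℝ)*x := h
    have hpx2 : (p:ℝ)*x < ((j:ℝ)+1)*π/(2*q) := by
      have h := mul_lt_mul_of_pos_left hx2 hp'
      calc (p:ℝ)*x < (p:ℝ)*(((j+1:ℕ):ℝ)*δ) := h
        _ = ((j:ℝ)+1)*π/(2*q) := by rw [hδ]; push_cast; field_simp
    have hqx1 : (j:ℝ)*π/(2*p) < (q:ℝ)*x := by
      have h := mul_lt_mul_of_pos_left hx1 hq'
      calc (j:ℝ)*π/(2*p) = (q:ℝ)*((j:ℝ)*δ) := by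
            rw [hδ]; push_cast; field_simp
        _ < (q:ℝ)*x := h
    have hqx2 : (q:ℝ)*x < ((j:ℝ)+1)*π/(2*p) := by
      have h := mul_lt_mul_of_pos_left hx2 hq'
      calc (q:ℝ)*x < (q:ℝ)*(((j+1:ℕ):ℝ)*δ) := h
        _ = ((j:ℝ)+1)*π/(2*p) := by rw [hδ]; push_cast; field_simp
    simp only
    rw [sign_cos_grid q j hq hpx1 hpx2, sign_cos_grid p j hp hqx1 hqx2]
  rw [MeasureTheory.setIntegral_congr_fun measurableSet_Ioo hconst]
  rw [MeasureTheory.setIntegral_const, measureReal_def, Real.volume_Ioo]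
  rw [show ((j+1:ℕ):ℝ)*δ - (j:ℝ)*δ = δ by push_cast; ring]
  rw [ENNReal.toReal_ofReal hδpos.le, smul_eq_mul, pow_add, hδ]
  push_cast
  ring

lemma integral_reduce (g p q : ℕ) (hg : 0 < g) :
    ∫ x in (0:ℝ)..(2*π), Real.sign (Real.cos (((g*p:ℕ):ℝ)*x)) * Real.sign (Real.cos (((g*q:ℕ):ℝ)*x))
    = ∫ x in (0:ℝ)..(2*π), Real.sign (Real.cos ((p:ℝ)*x)) * Real.sign (Real.cos ((q:ℝ)*x)) := by
  have hg' : (0:ℝ) < g := by exact_mod_cast hg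
  have hFper : Function.Periodic
      (fun y : ℝ => Real.sign (Real.cos ((p:ℝ)*y)) * Real.sign (Real.cos ((q:ℝ)*y))) (2*π) := by
    intro y
    have e1 : (p:ℝ)*(y+2*π) = (p:ℝ)*y + (p:ℤ)*(2*π) := by push_cast; ring
    have e2 : (q:ℝ)*(y+2*π) = (q:ℝ)*y + (q:ℤ)*(2*π) := by push_cast; ring
    simp only [e1, e2, Real.cos_add_int_mul_two_pi]
  have h1 : (fun x : ℝ => Real.sign (Real.cos (((g*p:ℕ):ℝ)*x)) * Real.sign (Real.cos (((g*q:ℕ):ℝ)*x)))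
      = fun x : ℝ => Real.sign (Real.cos ((p:ℝ)*((g:ℝ)*x))) * Real.sign (Real.cos ((q:ℝ)*((g:ℝ)*x))) := by
    funext x
    have e1 : ((g*p:ℕ):ℝ)*x = (p:ℝ)*((g:ℝ)*x) := by push_cast; ring
    have e2 : ((g*q:ℕ):ℝ)*x = (q:ℝ)*((g:ℝ)*x) := by push_cast; ring
    rw [e1, e2]
  rw [h1]
  rw [intervalIntegral.integral_comp_mul_left
    (fun y => Real.sign (Real.cos ((p:ℝ)*y)) * Real.sign (Real.cos ((q:ℝ)*y))) (ne_of_gt hg')]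
  rw [mul_zero]
  rw [show (g:ℝ)*(2*π) = 0 + (g:ℤ) • (2*π) by rw [zsmul_eq_mul]; push_cast; ring]
  rw [hFper.intervalIntegral_add_zsmul_eq (g:ℤ) 0 (fun t₁ t₂ => f_intble p q t₁ t₂)]
  rw [zero_add, zsmul_eq_mul, smul_eq_mul]
  push_cast
  rw [← mul_assoc, inv_mul_cancel₀ (ne_of_gt hg'), one_mul]

lemma f_intOn (p q : ℕ) (A B : ℝ) : IntegrableOn (fun x : ℝ =>
    Real.sign (Real.cos ((p:ℝ)*x)) * Real.sign (Real.cos ((q:ℝ)*x))) (Icc A B) volume := by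
  refine Integrable.mono' (g := fun _ => (1:ℝ))
    (integrableOn_const measure_Icc_lt_top.ne) ((f_meas p q).aestronglyMeasurable) ?_
  filter_upwards with x
  rw [Real.norm_eq_abs, abs_mul]
  calc |Real.sign (Real.cos ((p:ℝ)*x))| * |Real.sign (Real.cos ((q:ℝ)*x))|
      ≤ 1 * 1 := mul_le_mul (abs_sign_le _) (abs_sign_le _) (abs_nonneg _) zero_le_one
    _ = 1 := by norm_num

lemma zeroset_null (n : ℕ) (hn : 0 < n) : volume {x : ℝ | Real.cos ((n:ℝ)*x) = 0} = 0 := by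
  have hn' : ((n:ℝ)) ≠ 0 := by positivity
  have hsub : {x : ℝ | Real.cos ((n:ℝ)*x) = 0}
      ⊆ Set.range (fun k : ℤ => ((2*(k:ℝ)+1)*π/2)/(n:ℝ)) := by
    intro x hx
    obtain ⟨k, hk⟩ := Real.cos_eq_zero_iff.mp hx
    refine ⟨k, ?_⟩
    show ((2*(k:ℝ)+1)*π/2)/(n:ℝ) = x
    rw [div_eq_iff hn']
    linear_combination -hk
  exact measure_mono_null hsub ((Set.countable_range _).measure_zero _)

lemma ind_eq (u v w : ℝ) (hu : u ≠ 0) (hv : v ≠ 0) (hw : w ≠ 0) :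
    (if ((0<u ∧ 0<v ∧ 0<w) ∨ (u<0 ∧ v<0 ∧ w<0)) then (1:ℝ) else 0)
      = (1 + Real.sign u * Real.sign v + Real.sign u * Real.sign w
          + Real.sign v * Real.sign w)/4 := by
  rcases hu.lt_or_gt with h1 | h1 <;> rcases hv.lt_or_gt with h2 | h2 <;>
    rcases hw.lt_or_gt with h3 | h3
  · rw [if_pos (Or.inr ⟨h1,h2,h3⟩), Real.sign_of_neg h1, Real.sign_of_neg h2,
      Real.sign_of_neg h3]; norm_num
  · rw [if_neg (by rintro (⟨c1,c2,c3⟩|⟨c1,c2,c3⟩) <;> linarith), Real.sign_of_neg h1,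
      Real.sign_of_neg h2, Real.sign_of_pos h3]; norm_num
  · rw [if_neg (by rintro (⟨c1,c2,c3⟩|⟨c1,c2,c3⟩) <;> linarith), Real.sign_of_neg h1,
      Real.sign_of_pos h2, Real.sign_of_neg h3]; norm_num
  · rw [if_neg (by rintro (⟨c1,c2,c3⟩|⟨c1,c2,c3⟩) <;> linarith), Real.sign_of_neg h1,
      Real.sign_of_pos h2, Real.sign_of_pos h3]; norm_num
  · rw [if_neg (by rintro (⟨c1,c2,c3⟩|⟨c1,c2,c3⟩) <;> linarith), Real.sign_of_pos h1,
      Real.sign_of_neg h2, Real.sign_of_neg h3]; norm_num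
  · rw [if_neg (by rintro (⟨c1,c2,c3⟩|⟨c1,c2,c3⟩) <;> linarith), Real.sign_of_pos h1,
      Real.sign_of_neg h2, Real.sign_of_pos h3]; norm_num
  · rw [if_neg (by rintro (⟨c1,c2,c3⟩|⟨c1,c2,c3⟩) <;> linarith), Real.sign_of_pos h1,
      Real.sign_of_pos h2, Real.sign_of_neg h3]; norm_num
  · rw [if_pos (Or.inl ⟨h1,h2,h3⟩), Real.sign_of_pos h1, Real.sign_of_pos h2,
      Real.sign_of_pos h3]; norm_num

lemma cosP_formula (a b c : ℕ) (ha : 0 < a) (hb : 0 < b) (hc : 0 < c) :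
    cosP 3 ![a, b, c] = (2*π
      + (∫ x in (0:ℝ)..2*π, Real.sign (Real.cos ((a:ℝ)*x)) * Real.sign (Real.cos ((b:ℝ)*x)))
      + (∫ x in (0:ℝ)..2*π, Real.sign (Real.cos ((a:ℝ)*x)) * Real.sign (Real.cos ((c:ℝ)*x)))
      + (∫ x in (0:ℝ)..2*π, Real.sign (Real.cos ((b:ℝ)*x)) * Real.sign (Real.cos ((c:ℝ)*x))))
      / 4 / (2*π) := by
  have hπ := Real.pi_pos
  set T : Set ℝ := {x : ℝ | (0 < Real.cos ((a:ℝ)*x) ∧ 0 < Real.cos ((b:ℝ)*x) ∧ 0 < Real.cos ((c:ℝ)*x))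
      ∨ (Real.cos ((a:ℝ)*x) < 0 ∧ Real.cos ((b:ℝ)*x) < 0 ∧ Real.cos ((c:ℝ)*x) < 0)} with hT
  have hcont : ∀ n : ℕ, Continuous (fun x : ℝ => Real.cos ((n:ℝ)*x)) :=
    fun n => Real.continuous_cos.comp (continuous_const.mul continuous_id)
  have hTm : MeasurableSet T := by
    apply MeasurableSet.union
    · exact (((isOpen_lt continuous_const (hcont a)).inter
        ((isOpen_lt continuous_const (hcont b)).inter
          (isOpen_lt continuous_const (hcont c)))).measurableSet)
    · exact (((isOpen_lt (hcont a) continuous_const).inter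
        ((isOpen_lt (hcont b) continuous_const).inter
          (isOpen_lt (hcont c) continuous_const))).measurableSet)
  have hSeq : {x : ℝ | x ∈ Icc 0 (2 * π) ∧
      ((∀ i, 0 < Real.cos ((![a,b,c] i : ℕ) * x)) ∨ (∀ i, Real.cos ((![a,b,c] i : ℕ) * x) < 0))}
      = T ∩ Icc 0 (2*π) := by
    ext x
    simp only [Set.mem_inter_iff, Set.mem_setOf_eq, hT]
    constructor
    · rintro ⟨hx, h | h⟩
      · exact ⟨Or.inl ⟨h 0, h 1, h 2⟩, hx⟩
      · exact ⟨Or.inr ⟨h 0, h 1, h 2⟩, hx⟩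
    · rintro ⟨h | h, hx⟩
      · refine ⟨hx, Or.inl (fun i => ?_)⟩
        fin_cases i
        · exact h.1
        · exact h.2.1
        · exact h.2.2
      · refine ⟨hx, Or.inr (fun i => ?_)⟩
        fin_cases i
        · exact h.1
        · exact h.2.1
        · exact h.2.2
  unfold cosP
  rw [hSeq]
  have hres : volume (T ∩ Icc 0 (2*π)) = (volume.restrict (Icc 0 (2*π))) T :=
    (Measure.restrict_apply hTm).symm
  rw [hres]
  have hind : ((volume.restrict (Icc 0 (2*π))) T).toReal
      = ∫ x in Icc 0 (2*π), T.indicator (fun _ => (1:ℝ)) x := by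
    rw [MeasureTheory.integral_indicator_const (1:ℝ) hTm, smul_eq_mul, mul_one, measureReal_def]
  rw [hind]
  have hZ : volume ({x : ℝ | Real.cos ((a:ℝ)*x) = 0} ∪ {x : ℝ | Real.cos ((b:ℝ)*x) = 0}
      ∪ {x : ℝ | Real.cos ((c:ℝ)*x) = 0}) = 0 :=
    measure_union_null (measure_union_null (zeroset_null a ha) (zeroset_null b hb))
      (zeroset_null c hc)
  have hae : T.indicator (fun _ => (1:ℝ)) =ᵐ[volume] fun x =>
      (1 + Real.sign (Real.cos ((a:ℝ)*x)) * Real.sign (Real.cos ((b:ℝ)*x))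
        + Real.sign (Real.cos ((a:ℝ)*x)) * Real.sign (Real.cos ((c:ℝ)*x))
        + Real.sign (Real.cos ((b:ℝ)*x)) * Real.sign (Real.cos ((c:ℝ)*x)))/4 := by
    rw [Filter.EventuallyEq, MeasureTheory.ae_iff]
    refine measure_mono_null ?_ hZ
    intro x hx
    simp only [Set.mem_setOf_eq] at hx
    by_contra hxZ
    simp only [Set.mem_union, Set.mem_setOf_eq] at hxZ
    push_neg at hxZ
    obtain ⟨⟨hxa, hxb⟩, hxc⟩ := hxZ
    apply hx
    rw [Set.indicator_apply]
    have : (x ∈ T) = ((0 < Real.cos ((a:ℝ)*x) ∧ 0 < Real.cos ((b:ℝ)*x) ∧ 0 < Real.cos ((c:ℝ)*x))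
        ∨ (Real.cos ((a:ℝ)*x) < 0 ∧ Real.cos ((b:ℝ)*x) < 0 ∧ Real.cos ((c:ℝ)*x) < 0)) := rfl
    simp only [this]
    exact ind_eq _ _ _ hxa hxb hxc
  rw [MeasureTheory.integral_congr_ae (MeasureTheory.ae_restrict_of_ae hae)]
  have hint1 : IntegrableOn (fun _ : ℝ => (1:ℝ)) (Icc 0 (2*π)) volume :=
    integrableOn_const measure_Icc_lt_top.ne
  have e1 : ∫ x in Icc 0 (2*π), (fun x =>
      (1 + Real.sign (Real.cos ((a:ℝ)*x)) * Real.sign (Real.cos ((b:ℝ)*x))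
        + Real.sign (Real.cos ((a:ℝ)*x)) * Real.sign (Real.cos ((c:ℝ)*x))
        + Real.sign (Real.cos ((b:ℝ)*x)) * Real.sign (Real.cos ((c:ℝ)*x)))/4) x
      = ((∫ x in Icc 0 (2*π), (1:ℝ))
        + (∫ x in Icc 0 (2*π), Real.sign (Real.cos ((a:ℝ)*x)) * Real.sign (Real.cos ((b:ℝ)*x)))
        + (∫ x in Icc 0 (2*π), Real.sign (Real.cos ((a:ℝ)*x)) * Real.sign (Real.cos ((c:ℝ)*x)))
        + (∫ x in Icc 0 (2*π), Real.sign (Real.cos ((b:ℝ)*x)) * Real.sign (Real.cos ((c:ℝ)*x))))/4 := by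
    rw [MeasureTheory.integral_div]
    congr 1
    have hone : Integrable (fun _ : ℝ => (1:ℝ)) (volume.restrict (Icc 0 (2*π))) := hint1
    have hab' : Integrable (fun x : ℝ => Real.sign (Real.cos ((a:ℝ)*x)) * Real.sign (Real.cos ((b:ℝ)*x)))
        (volume.restrict (Icc 0 (2*π))) := f_intOn a b 0 (2*π)
    have hac' : Integrable (fun x : ℝ => Real.sign (Real.cos ((a:ℝ)*x)) * Real.sign (Real.cos ((c:ℝ)*x)))
        (volume.restrict (Icc 0 (2*π))) := f_intOn a c 0 (2*π)
    have hbc' : Integrable (fun x : ℝ => Real.sign (Real.cos ((b:ℝ)*x)) * Real.sign (Real.cos ((c:ℝ)*x)))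
        (volume.restrict (Icc 0 (2*π))) := f_intOn b c 0 (2*π)
    have g1 : Integrable (fun x : ℝ => 1 + Real.sign (Real.cos ((a:ℝ)*x)) * Real.sign (Real.cos ((b:ℝ)*x)))
        (volume.restrict (Icc 0 (2*π))) := hone.add hab'
    have g2 : Integrable (fun x : ℝ => 1 + Real.sign (Real.cos ((a:ℝ)*x)) * Real.sign (Real.cos ((b:ℝ)*x))
        + Real.sign (Real.cos ((a:ℝ)*x)) * Real.sign (Real.cos ((c:ℝ)*x)))
        (volume.restrict (Icc 0 (2*π))) := g1.add hac'
    rw [MeasureTheory.integral_add g2 hbc', MeasureTheory.integral_add g1 hac',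
      MeasureTheory.integral_add hone hab']
  rw [e1]
  have econst : ∫ x in Icc 0 (2*π), (1:ℝ) = 2*π := by
    rw [MeasureTheory.setIntegral_const, measureReal_def, Real.volume_Icc, smul_eq_mul, mul_one]
    rw [ENNReal.toReal_ofReal (by linarith)]
    ring
  have eI : ∀ p q : ℕ, ∫ x in Icc 0 (2*π), Real.sign (Real.cos ((p:ℝ)*x)) * Real.sign (Real.cos ((q:ℝ)*x))
      = ∫ x in (0:ℝ)..2*π, Real.sign (Real.cos ((p:ℝ)*x)) * Real.sign (Real.cos ((q:ℝ)*x)) := by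
    intro p q
    rw [MeasureTheory.integral_Icc_eq_integral_Ioc,
      intervalIntegral.integral_of_le (by linarith : (0:ℝ) ≤ 2*π)]
  rw [econst, eI a b, eI a c, eI b c]

-- ### new material

lemma I_val (g p q : ℕ) (hg : 0 < g) (hp : 0 < p) (hq : 0 < q) (hco : Nat.Coprime p q) :
    ∫ x in (0:ℝ)..2*π, Real.sign (Real.cos (((g*p:ℕ):ℝ)*x)) * Real.sign (Real.cos (((g*q:ℕ):ℝ)*x))
      = 2*π*(((chi4 p * chi4 q : ℤ):ℝ)/((p:ℝ)*(q:ℝ))) := by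
  have hp' : ((p:ℝ)) ≠ 0 := by positivity
  have hq' : ((q:ℝ)) ≠ 0 := by positivity
  rw [integral_reduce g p q hg, integralPair p q hp hq]
  have hcast : ∑ j ∈ Finset.range (4*(p*q)), ((-1:ℝ)^((j+p)/(2*p)+(j+q)/(2*q)))
      = (((∑ j ∈ Finset.range (4*(p*q)), ((-1:ℤ)^((j+p)/(2*p)+(j+q)/(2*q)))) : ℤ) : ℝ) := by
    push_cast; rfl
  rw [hcast, sum_T p q hp hq hco]
  push_cast
  field_simp
  ring

lemma exists_g {a b p q : ℕ} (ha : 0 < a) (hp : 0 < p) (hq : 0 < q)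
    (hco : Nat.Coprime p q) (h : a * q = b * p) : ∃ g, 0 < g ∧ a = g * p ∧ b = g * q := by
  have hpa : p ∣ a := by
    refine Nat.Coprime.dvd_of_dvd_mul_right hco ⟨b, ?_⟩
    rw [h, Nat.mul_comm]
  obtain ⟨g, hg⟩ := hpa
  have hgpos : 0 < g := by
    rcases Nat.eq_zero_or_pos g with h0 | h0
    · subst h0; rw [Nat.mul_zero] at hg; omega
    · exact h0
  refine ⟨g, hgpos, by rw [hg, Nat.mul_comm], ?_⟩
  have h2 : (g * q) * p = b * p := by rw [← h, hg]; ring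
  exact (Nat.eq_of_mul_eq_mul_right hp h2).symm

lemma chi4_vals (p : ℕ) : chi4 p = -1 ∨ chi4 p = 0 ∨ chi4 p = 1 := by
  unfold chi4; split_ifs <;> simp

lemma chi4_ne_zero_odd {p : ℕ} (h : chi4 p ≠ 0) : p % 2 = 1 := by
  unfold chi4 at h
  split_ifs at h with h1 h2 <;> omega

lemma chi4_even {p : ℕ} (h : p % 2 = 0) : chi4 p = 0 := by
  unfold chi4; split_ifs with h1 h2 <;> omega

lemma chi4_prod_ge (p q : ℕ) : -1 ≤ chi4 p * chi4 q := by
  rcases chi4_vals p with h | h | h <;> rcases chi4_vals q with h' | h' | h' <;>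
    rw [h, h'] <;> norm_num

lemma K_ge (p q : ℕ) (hp : 0 < p) (hq : 0 < q) :
    -(1:ℝ)/((p:ℝ)*q) ≤ ((chi4 p * chi4 q : ℤ):ℝ)/((p:ℝ)*(q:ℝ)) := by
  apply div_le_div_of_nonneg_right ?_ ?_ |>.trans_eq rfl
  · exact_mod_cast (by exact_mod_cast chi4_prod_ge p q : (-1:ℝ) ≤ ((chi4 p * chi4 q : ℤ):ℝ))
  · positivity

lemma K_bound (p q : ℕ) (hp : 0 < p) (hq : 0 < q) (hne : p ≠ q) :
    -(1:ℝ)/3 ≤ ((chi4 p * chi4 q : ℤ):ℝ)/((p:ℝ)*(q:ℝ)) := by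
  by_cases h0 : chi4 p * chi4 q = 0
  · rw [h0]; norm_num
  · have hpo : p % 2 = 1 := chi4_ne_zero_odd (fun h => h0 (by rw [h, zero_mul]))
    have hqo : q % 2 = 1 := chi4_ne_zero_odd (fun h => h0 (by rw [h, mul_zero]))
    have h3n : 3 ≤ p * q := by
      have h3 : 3 ≤ p ∨ 3 ≤ q := by omega
      rcases h3 with h3 | h3
      · calc 3 ≤ p := h3
          _ = p * 1 := (mul_one p).symm
          _ ≤ p * q := Nat.mul_le_mul_left p hq
      · calc 3 ≤ q := h3
          _ = 1 * q := (one_mul q).symm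
          _ ≤ p * q := Nat.mul_le_mul_right q hp
    have h3r : (3:ℝ) ≤ (p:ℝ)*(q:ℝ) := by exact_mod_cast h3n
    have hm : (-1:ℝ) ≤ ((chi4 p * chi4 q : ℤ):ℝ) := by exact_mod_cast chi4_prod_ge p q
    rw [div_le_div_iff₀ (by norm_num) (by positivity)]
    nlinarith

lemma mixed_chi {g p q x y : ℕ} (hx : x = g*p) (hy : y = g*q) (hpar : x % 2 ≠ y % 2) :
    chi4 p * chi4 q = 0 := by
  have h1 := Nat.mul_mod g p 2
  have h2 := Nat.mul_mod g q 2
  have : p % 2 = 0 ∨ q % 2 = 0 := by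
    subst hx hy
    rcases Nat.mod_two_eq_zero_or_one g with hg2 | hg2 <;>
      rcases Nat.mod_two_eq_zero_or_one p with hp2 | hp2 <;>
      rcases Nat.mod_two_eq_zero_or_one q with hq2 | hq2 <;>
      simp only [hg2, hp2, hq2] at h1 h2 <;> omega
  rcases this with h | h
  · rw [chi4_even h, zero_mul]
  · rw [chi4_even h, mul_zero]

theorem stmt_15 (a b c : ℕ) (ha : 0 < a) (hb : 0 < b) (hc : 0 < c)
    (hab : a ≠ b) (hac : a ≠ c) (hbc : b ≠ c)
    (hgcd : Nat.gcd a (Nat.gcd b c) = 1) (hP : cosP 3 ![a, b, c] ≤ 1 / 9)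
    (p q r s u v : ℕ) (hp : 0 < p) (hq : 0 < q) (hr : 0 < r) (hs : 0 < s)
    (hu : 0 < u) (hv : 0 < v)
    (hpq : Nat.Coprime p q) (hrs : Nat.Coprime r s) (huv : Nat.Coprime u v)
    (h1 : a * q = b * p) (h2 : a * s = c * r) (h3 : b * v = c * u) :
    (Odd a ∧ Odd b ∧ Odd c) ∧
      1 / ((p : ℝ) * q) + 1 / ((r : ℝ) * s) + 1 / ((u : ℝ) * v) ≥ 5 / 9 := by
  have hπ := Real.pi_pos
  obtain ⟨g1, hg1, hag1, hbg1⟩ := exists_g ha hp hq hpq h1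
  obtain ⟨g2, hg2, hag2, hcg2⟩ := exists_g ha hr hs hrs h2
  obtain ⟨g3, hg3, hbg3, hcg3⟩ := exists_g hb hu hv huv h3
  set K1 : ℝ := ((chi4 p * chi4 q : ℤ):ℝ)/((p:ℝ)*(q:ℝ)) with hK1
  set K2 : ℝ := ((chi4 r * chi4 s : ℤ):ℝ)/((r:ℝ)*(s:ℝ)) with hK2
  set K3 : ℝ := ((chi4 u * chi4 v : ℤ):ℝ)/((u:ℝ)*(v:ℝ)) with hK3
  have Iab : (∫ x in (0:ℝ)..2*π, Real.sign (Real.cos ((a:ℝ)*x)) * Real.sign (Real.cos ((b:ℝ)*x)))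
      = 2*π*K1 := by
    rw [hK1]
    simp only [hag1, hbg1]
    exact_mod_cast I_val g1 p q hg1 hp hq hpq
  have Iac : (∫ x in (0:ℝ)..2*π, Real.sign (Real.cos ((a:ℝ)*x)) * Real.sign (Real.cos ((c:ℝ)*x)))
      = 2*π*K2 := by
    rw [hK2]
    simp only [hag2, hcg2]
    exact_mod_cast I_val g2 r s hg2 hr hs hrs
  have Ibc : (∫ x in (0:ℝ)..2*π, Real.sign (Real.cos ((b:ℝ)*x)) * Real.sign (Real.cos ((c:ℝ)*x)))
      = 2*π*K3 := by
    rw [hK3]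
    simp only [hbg3, hcg3]
    exact_mod_cast I_val g3 u v hg3 hu hv huv
  have hcos2 : cosP 3 ![a, b, c] = (1 + K1 + K2 + K3)/4 := by
    rw [cosP_formula a b c ha hb hc, Iab, Iac, Ibc]
    field_simp
  have hPP : 1 + K1 + K2 + K3 ≤ 4/9 := by
    rw [hcos2] at hP
    linarith
  -- pair inequality bounds
  have hpq' : p ≠ q := fun h => hab (by rw [hag1, hbg1, h])
  have hrs' : r ≠ s := fun h => hac (by rw [hag2, hcg2, h])
  have huv' : u ≠ v := fun h => hbc (by rw [hbg3, hcg3, h])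
  have hB1 : -(1:ℝ)/3 ≤ K1 := K_bound p q hp hq hpq'
  have hB2 : -(1:ℝ)/3 ≤ K2 := K_bound r s hr hs hrs'
  have hB3 : -(1:ℝ)/3 ≤ K3 := K_bound u v hu hv huv'
  -- parity case analysis
  rcases Nat.mod_two_eq_zero_or_one a with ha2 | ha2 <;>
    rcases Nat.mod_two_eq_zero_or_one b with hb2 | hb2 <;>
    rcases Nat.mod_two_eq_zero_or_one c with hc2 | hc2
  -- (0,0,0): impossible
  · exfalso
    have : 2 ∣ Nat.gcd a (Nat.gcd b c) :=
      Nat.dvd_gcd (by omega) (Nat.dvd_gcd (by omega) (by omega))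
    omega
  -- (0,0,1): K2 = K3 = 0
  · exfalso
    have z2 : K2 = 0 := by
      rw [hK2, mixed_chi hag2 hcg2 (by omega)]; norm_num
    have z3 : K3 = 0 := by
      rw [hK3, mixed_chi hbg3 hcg3 (by omega)]; norm_num
    linarith
  -- (0,1,0): K1 = K3 = 0
  · exfalso
    have z1 : K1 = 0 := by
      rw [hK1, mixed_chi hag1 hbg1 (by omega)]; norm_num
    have z3 : K3 = 0 := by
      rw [hK3, mixed_chi hbg3 hcg3 (by omega)]; norm_num
    linarith
  -- (0,1,1): K1 = K2 = 0
  · exfalso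
    have z1 : K1 = 0 := by
      rw [hK1, mixed_chi hag1 hbg1 (by omega)]; norm_num
    have z2 : K2 = 0 := by
      rw [hK2, mixed_chi hag2 hcg2 (by omega)]; norm_num
    linarith
  -- (1,0,0): K1 = K2 = 0
  · exfalso
    have z1 : K1 = 0 := by
      rw [hK1, mixed_chi hag1 hbg1 (by omega)]; norm_num
    have z2 : K2 = 0 := by
      rw [hK2, mixed_chi hag2 hcg2 (by omega)]; norm_num
    linarith
  -- (1,0,1): K1 = K3 = 0
  · exfalso
    have z1 : K1 = 0 := by
      rw [hK1, mixed_chi hag1 hbg1 (by omega)]; norm_num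
    have z3 : K3 = 0 := by
      rw [hK3, mixed_chi hbg3 hcg3 (by omega)]; norm_num
    linarith
  -- (1,1,0): K2 = K3 = 0
  · exfalso
    have z2 : K2 = 0 := by
      rw [hK2, mixed_chi hag2 hcg2 (by omega)]; norm_num
    have z3 : K3 = 0 := by
      rw [hK3, mixed_chi hbg3 hcg3 (by omega)]; norm_num
    linarith
  -- (1,1,1): all odd, main conclusion
  · refine ⟨⟨Nat.odd_iff.mpr ha2, Nat.odd_iff.mpr hb2, Nat.odd_iff.mpr hc2⟩, ?_⟩
    have hG1 : -(1:ℝ)/((p:ℝ)*q) ≤ K1 := K_ge p q hp hq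
    have hG2 : -(1:ℝ)/((r:ℝ)*s) ≤ K2 := K_ge r s hr hs
    have hG3 : -(1:ℝ)/((u:ℝ)*v) ≤ K3 := K_ge u v hu hv
    have e1 : -(1:ℝ)/((p:ℝ)*q) = -(1/((p:ℝ)*q)) := by ring
    have e2 : -(1:ℝ)/((r:ℝ)*s) = -(1/((r:ℝ)*s)) := by ring
    have e3 : -(1:ℝ)/((u:ℝ)*v) = -(1/((u:ℝ)*v)) := by ring
    rw [e1] at hG1; rw [e2] at hG2; rw [e3] at hG3
    linarith
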